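/- Let ℓ, c, D be integers with 0 ≤ ℓ < c and D > ℓ, let ν be a positive integer with ν ≥ ⌈(D − c)/c⌉, and set δ = (D − ℓ)/c. Then the convex hull of the set {(x, y) ∈ ℝ × {0,1}^ν : x + c · Σ_{i=1}^ν y_i ≥ D and ℓ ≤ x ≤ c} equals the set of all (x, y) ∈ ℝ × ℝ^ν satisfying: ℓ ≤ x ≤ c; 0 ≤ y_i ≤ 1 for all i; x + c Σ_i y_i ≥ D; Σ_i y_i ≥ ⌈(D − c)/c⌉; and x ≥ ℓ + c · (δ − ⌊δ⌋) · (⌈δ⌉ − Σ_i y_i). -/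

import Mathlib

open Finset

lemma binsum {ν : ℕ} (t : Finset (Fin ν)) (y : Fin ν → ℝ)
    (h : ∀ i ∈ t, y i = 0 ∨ y i = 1) :
    ∑ i ∈ t, y i = ((t.filter (fun i => y i = 1)).card : ℝ) := by
  rw [← Finset.sum_filter_add_sum_filter_not t (fun i => y i = 1)]
  have h1 : ∑ i ∈ t.filter (fun i => y i = 1), y i
      = ((t.filter (fun i => y i = 1)).card : ℝ) := by
    rw [Finset.sum_congr rfl (fun i hi => (Finset.mem_filter.1 hi).2)]
    simp
  have h2 : ∑ i ∈ t.filter (fun i => ¬ y i = 1), y i = 0 := by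
    apply Finset.sum_eq_zero
    intro i hi
    rcases Finset.mem_filter.1 hi with ⟨hit, hne⟩
    rcases h i hit with h0 | h1
    · exact h0
    · exact absurd h1 hne
  rw [h1, h2, add_zero]

lemma decomp {ν : ℕ} (s : ℝ) (y : Fin ν → ℝ) (h0 : ∀ i, 0 ≤ y i) (h1 : ∀ i, y i ≤ 1)
    (hs : ∑ i, y i = s) :
    y ∈ convexHull ℝ {z : Fin ν → ℝ | (∀ i, z i = 0 ∨ z i = 1) ∧
      (∑ i, z i = (⌊s⌋ : ℝ) ∨ ∑ i, z i = (⌈s⌉ : ℝ))} := by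
  set T : Set (Fin ν → ℝ) := {z : Fin ν → ℝ | (∀ i, z i = 0 ∨ z i = 1) ∧
      (∑ i, z i = (⌊s⌋ : ℝ) ∨ ∑ i, z i = (⌈s⌉ : ℝ))} with hT
  obtain ⟨n, hn⟩ : ∃ n, (Finset.univ.filter (fun i => y i ≠ 0 ∧ y i ≠ 1)).card ≤ n :=
    ⟨_, le_rfl⟩
  induction n generalizing y with
  | zero =>
    have hb : ∀ i, y i = 0 ∨ y i = 1 := by
      intro i
      by_contra hc
      push_neg at hc
      have : i ∈ Finset.univ.filter (fun i => y i ≠ 0 ∧ y i ≠ 1) := by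
        simp [hc.1, hc.2]
      simpa [Finset.card_eq_zero.1 (Nat.le_zero.1 hn)] using this
    apply subset_convexHull
    refine ⟨hb, Or.inl ?_⟩
    have := binsum Finset.univ y (fun i _ => hb i)
    rw [hs] at this
    rw [hs, this]
    norm_num
  | succ n ih =>
    by_cases hle : (Finset.univ.filter (fun i => y i ≠ 0 ∧ y i ≠ 1)).card ≤ n
    · exact ih y h0 h1 hs hle
    have hpos : 0 < (Finset.univ.filter (fun i => y i ≠ 0 ∧ y i ≠ 1)).card := by omega
    obtain ⟨i, hi⟩ := Finset.card_pos.1 hpos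
    rw [Finset.mem_filter] at hi
    obtain ⟨-, hi0, hi1⟩ := hi
    have hi0' : 0 < y i := lt_of_le_of_ne (h0 i) (Ne.symm hi0)
    have hi1' : y i < 1 := lt_of_le_of_ne (h1 i) hi1
    have hconv := convex_convexHull ℝ T
    by_cases hj : ∃ j, j ≠ i ∧ y j ≠ 0 ∧ y j ≠ 1
    · -- two fractional coordinates: exchange argument
      obtain ⟨j, hji, hj0, hj1⟩ := hj
      have hj0' : 0 < y j := lt_of_le_of_ne (h0 j) (Ne.symm hj0)
      have hj1' : y j < 1 := lt_of_le_of_ne (h1 j) hj1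
      have hij : i ≠ j := fun h => hji h.symm
      set ε1 : ℝ := min (y i) (1 - y j) with hε1
      set ε2 : ℝ := min (1 - y i) (y j) with hε2
      have hε1pos : 0 < ε1 := lt_min hi0' (by linarith)
      have hε2pos : 0 < ε2 := lt_min (by linarith) hj0'
      set y' : Fin ν → ℝ := fun k => if k = i then y i - ε1 else if k = j then y j + ε1 else y k with hy'
      set y'' : Fin ν → ℝ := fun k => if k = i then y i + ε2 else if k = j then y j - ε2 else y k with hy''
      have key : ∀ (e : ℝ),
          ∑ k, (fun k => if k = i then y i - e else if k = j then y j + e else y k) k = s := by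
        intro e
        have he : ∀ k, (if k = i then y i - e else if k = j then y j + e else y k)
            = y k + (if k = i then -e else 0) + (if k = j then e else 0) := by
          intro k
          rcases eq_or_ne k i with hk | hk
          · subst hk; rw [if_pos rfl, if_pos rfl, if_neg hij]; ring
          · rcases eq_or_ne k j with hk' | hk'
            · subst hk'; rw [if_neg hk, if_pos rfl, if_neg hk, if_pos rfl]; ring
            · rw [if_neg hk, if_neg hk', if_neg hk, if_neg hk']; ring
        rw [Finset.sum_congr rfl (fun k _ => he k)]
        rw [Finset.sum_add_distrib, Finset.sum_add_distrib]
        simp [hs]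
      have hs' : ∑ k, y' k = s := key ε1
      have hs'' : ∑ k, y'' k = s := by
        have h := key (-ε2)
        rw [← h]
        apply Finset.sum_congr rfl
        intro k _
        simp only [hy'']
        split_ifs <;> ring
      have hb' : (∀ k, 0 ≤ y' k) ∧ (∀ k, y' k ≤ 1) := by
        constructor <;> intro k <;> simp only [hy'] <;> split_ifs with h h'
        · have : ε1 ≤ y i := min_le_left _ _; linarith
        · linarith [h0 j, hε1pos]
        · exact h0 k
        · linarith [h1 i, hε1pos]
        · have : ε1 ≤ 1 - y j := min_le_right _ _; linarith
        · exact h1 k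
      have hb'' : (∀ k, 0 ≤ y'' k) ∧ (∀ k, y'' k ≤ 1) := by
        constructor <;> intro k <;> simp only [hy''] <;> split_ifs with h h'
        · linarith [h0 i, hε2pos]
        · have : ε2 ≤ y j := min_le_right _ _; linarith
        · exact h0 k
        · have : ε2 ≤ 1 - y i := min_le_left _ _; linarith
        · linarith [h1 j, hε2pos]
        · exact h1 k
      -- fractional sets shrink
      have hsub : ∀ (w : Fin ν → ℝ), (∀ k, k ≠ i → k ≠ j → w k = y k) → (w i = 0 ∨ w i = 1 ∨ w j = 0 ∨ w j = 1) →
          (Finset.univ.filter (fun k => w k ≠ 0 ∧ w k ≠ 1)).card ≤ n := by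
        intro w hagree hint
        have hss : Finset.univ.filter (fun k => w k ≠ 0 ∧ w k ≠ 1)
            ⊂ Finset.univ.filter (fun k => y k ≠ 0 ∧ y k ≠ 1) := by
          constructor
          · intro k hk
            rw [Finset.mem_filter] at hk ⊢
            refine ⟨Finset.mem_univ _, ?_⟩
            rcases eq_or_ne k i with rfl | hki
            · exact ⟨hi0, hi1⟩
            rcases eq_or_ne k j with rfl | hkj
            · exact ⟨hj0, hj1⟩
            rw [← hagree k hki hkj]; exact hk.2
          · intro hsup
            rcases hint with h | h | h | h
            · have := hsup (by rw [Finset.mem_filter]; exact ⟨Finset.mem_univ _, hi0, hi1⟩)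
              rw [Finset.mem_filter] at this; exact this.2.1 h
            · have := hsup (by rw [Finset.mem_filter]; exact ⟨Finset.mem_univ _, hi0, hi1⟩)
              rw [Finset.mem_filter] at this; exact this.2.2 h
            · have := hsup (by rw [Finset.mem_filter]; exact ⟨Finset.mem_univ _, hj0, hj1⟩)
              rw [Finset.mem_filter] at this; exact this.2.1 h
            · have := hsup (by rw [Finset.mem_filter]; exact ⟨Finset.mem_univ _, hj0, hj1⟩)
              rw [Finset.mem_filter] at this; exact this.2.2 h
        have := Finset.card_lt_card hss
        omega
      have e1 : y' i = y i - ε1 := by simp [hy']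
      have e2 : y' j = y j + ε1 := by simp [hy', hji]
      have f1 : y'' i = y i + ε2 := by simp [hy'']
      have f2 : y'' j = y j - ε2 := by simp [hy'', hji]
      have hcard' : (Finset.univ.filter (fun k => y' k ≠ 0 ∧ y' k ≠ 1)).card ≤ n := by
        apply hsub
        · intro k hki hkj; simp only [hy']; rw [if_neg hki, if_neg hkj]
        · rcases min_cases (y i) (1 - y j) with ⟨hmin, -⟩ | ⟨hmin, -⟩
          · left; rw [e1, hε1, hmin]; ring
          · right; right; right; rw [e2, hε1, hmin]; ring
      have hcard'' : (Finset.univ.filter (fun k => y'' k ≠ 0 ∧ y'' k ≠ 1)).card ≤ n := by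
        apply hsub
        · intro k hki hkj; simp only [hy'']; rw [if_neg hki, if_neg hkj]
        · rcases min_cases (1 - y i) (y j) with ⟨hmin, -⟩ | ⟨hmin, -⟩
          · right; left; rw [f1, hε2, hmin]; ring
          · right; right; left; rw [f2, hε2, hmin]; ring
      have m' := ih y' hb'.1 hb'.2 hs' hcard'
      have m'' := ih y'' hb''.1 hb''.2 hs'' hcard''
      have hne : ε1 + ε2 ≠ 0 := by positivity
      have hcomb : y = (ε2 / (ε1 + ε2)) • y' + (ε1 / (ε1 + ε2)) • y'' := by
        funext k
        simp only [Pi.add_apply, Pi.smul_apply, smul_eq_mul, hy', hy'']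
        split_ifs with hk1 hk2
        · subst hk1; field_simp; ring
        · subst hk2; field_simp; ring
        · field_simp; ring
      rw [hcomb]
      exact hconv m' m'' (by positivity) (by positivity)
        (by rw [← add_div, add_comm ε2 ε1, div_self hne])
    · -- exactly one fractional coordinate i
      push_neg at hj
      have hrest : ∀ k, k ≠ i → (y k = 0 ∨ y k = 1) := by
        intro k hk
        by_contra hc
        push_neg at hc
        exact hc.2 (hj k hk hc.1)
      set y' : Fin ν → ℝ := Function.update y i 0 with hy'
      set y'' : Fin ν → ℝ := Function.update y i 1 with hy''
      have hb' : ∀ k, y' k = 0 ∨ y' k = 1 := by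
        intro k
        rcases eq_or_ne k i with rfl | hk
        · left; simp [hy']
        · rw [hy', Function.update_of_ne hk]; exact hrest k hk
      have hb'' : ∀ k, y'' k = 0 ∨ y'' k = 1 := by
        intro k
        rcases eq_or_ne k i with rfl | hk
        · right; simp [hy'']
        · rw [hy'', Function.update_of_ne hk]; exact hrest k hk
      have hsum' : ∑ k, y' k = s - y i := by
        rw [hy', Finset.sum_update_of_mem (Finset.mem_univ i)]
        rw [← hs, ← Finset.sum_erase_add Finset.univ y (Finset.mem_univ i),
          Finset.erase_eq]
        ring
      have hsum'' : ∑ k, y'' k = s - y i + 1 := by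
        rw [hy'', Finset.sum_update_of_mem (Finset.mem_univ i)]
        rw [← hs, ← Finset.sum_erase_add Finset.univ y (Finset.mem_univ i),
          Finset.erase_eq]
        ring
      -- s - y i is an integer = ⌊s⌋
      have hint : ∑ k, y' k = ((Finset.univ.filter (fun k => y' k = 1)).card : ℝ) :=
        binsum Finset.univ y' (fun k _ => hb' k)
      have hfloor : ((⌊s⌋ : ℤ) : ℝ) = s - y i := by
        have h1 : s = ((Finset.univ.filter (fun k => y' k = 1)).card : ℝ) + y i := by
          rw [← hint, hsum']; ring
        have : ⌊s⌋ = ((Finset.univ.filter (fun k => y' k = 1)).card : ℤ) := by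
          rw [Int.floor_eq_iff]
          constructor
          · push_cast; rw [h1]; linarith
          · push_cast; rw [h1]; push_cast; linarith
        rw [this, h1, ← hint, hsum']
        push_cast
        linarith
      have h2 : (⌈s⌉ : ℤ) = ⌊s⌋ + 1 := by
        have hlt : ((⌊s⌋ : ℤ) : ℝ) < s := by linarith [hfloor, hi0']
        have a1 : (⌊s⌋ : ℤ) < ⌈s⌉ := by
          exact_mod_cast lt_of_lt_of_le hlt (Int.le_ceil s)
        have a2 : (⌈s⌉ : ℤ) ≤ ⌊s⌋ + 1 := Int.ceil_le_floor_add_one s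
        omega
      have hceil : ((⌈s⌉ : ℤ) : ℝ) = s - y i + 1 := by
        rw [h2]; push_cast; linarith [hfloor]
      have m' : y' ∈ T := ⟨hb', Or.inl (by rw [hsum', hfloor])⟩
      have m'' : y'' ∈ T := ⟨hb'', Or.inr (by rw [hsum'', hceil])⟩
      have hcomb : y = (1 - y i) • y' + (y i) • y'' := by
        funext k
        rcases eq_or_ne k i with rfl | hk
        · simp [hy', hy'']
        · simp only [Pi.add_apply, Pi.smul_apply, smul_eq_mul, hy', hy'',
            Function.update_of_ne hk]
          ring
      rw [hcomb]
      exact hconv (subset_convexHull ℝ T m') (subset_convexHull ℝ T m'')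
        (by linarith) (le_of_lt hi0') (by ring)



set_option maxHeartbeats 1600000 in
/-- Description of the convex hull of
`{(x, y) ∈ ℝ × {0,1}^ν : x + c·Σ y_i ≥ D, ℓ ≤ x ≤ c}` with `δ = (D − ℓ)/c`. -/
theorem stmt14
    (l c D : ℤ) (hl : 0 ≤ l) (hlc : l < c) (hD : l < D)
    (ν : ℕ) (hν : 0 < ν)
    (hν' : ⌈((D : ℝ) - (c : ℝ)) / (c : ℝ)⌉ ≤ (ν : ℤ))
    (δ : ℝ) (hδ : δ = ((D : ℝ) - (l : ℝ)) / (c : ℝ)) :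
    convexHull ℝ
      {p : ℝ × (Fin ν → ℝ) | (∀ i, p.2 i = 0 ∨ p.2 i = 1) ∧
        (D : ℝ) ≤ p.1 + (c : ℝ) * ∑ i, p.2 i ∧ (l : ℝ) ≤ p.1 ∧ p.1 ≤ (c : ℝ)} =
    {p : ℝ × (Fin ν → ℝ) | (l : ℝ) ≤ p.1 ∧ p.1 ≤ (c : ℝ) ∧
      (∀ i, 0 ≤ p.2 i ∧ p.2 i ≤ 1) ∧
      (D : ℝ) ≤ p.1 + (c : ℝ) * (∑ i, p.2 i) ∧
      (⌈((D : ℝ) - (c : ℝ)) / (c : ℝ)⌉ : ℝ) ≤ (∑ i, p.2 i) ∧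
      (l : ℝ) + (c : ℝ) * (δ - ⌊δ⌋) * ((⌈δ⌉ : ℝ) - ∑ i, p.2 i) ≤ p.1} := by
  have hc0 : (0:ℝ) < (c:ℝ) := by exact_mod_cast lt_of_le_of_lt hl hlc
  have hlcR : (l:ℝ) < (c:ℝ) := by exact_mod_cast hlc
  have hcδ : (c:ℝ) * δ = (D:ℝ) - (l:ℝ) := by rw [hδ]; field_simp
  have hF : ((⌊δ⌋:ℤ):ℝ) ≤ δ := Int.floor_le δ
  have hF1 : δ < ((⌊δ⌋:ℤ):ℝ) + 1 := Int.lt_floor_add_one δ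
  have hC : δ ≤ ((⌈δ⌉:ℤ):ℝ) := Int.le_ceil δ
  have hCF : ((⌈δ⌉:ℤ):ℝ) ≤ ((⌊δ⌋:ℤ):ℝ) + 1 := by exact_mod_cast Int.ceil_le_floor_add_one δ
  apply Set.Subset.antisymm
  · -- convex hull ⊆ polyhedron
    apply convexHull_min
    · rintro p ⟨hb, hDp, hlp, hpc⟩
      have hK : ∑ i, p.2 i = ((Finset.univ.filter (fun i => p.2 i = 1)).card : ℝ) :=
        binsum Finset.univ p.2 (fun i _ => hb i)
      set K : ℕ := (Finset.univ.filter (fun i => p.2 i = 1)).card with hKdef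
      refine ⟨hlp, hpc, ?_, hDp, ?_, ?_⟩
      · intro i; rcases hb i with h | h <;> rw [h] <;> norm_num
      · have h1 : ((D:ℝ) - c) / c ≤ (K:ℝ) := by
          rw [div_le_iff₀ hc0]
          rw [hK] at hDp
          nlinarith
        have h2 : ⌈((D:ℝ) - c) / c⌉ ≤ (K:ℤ) := Int.ceil_le.2 (by exact_mod_cast h1)
        rw [hK]
        exact_mod_cast h2
      · rw [hK]
        by_cases hKc : ((⌈δ⌉:ℤ):ℝ) ≤ (K:ℝ)
        · have hnn : (0:ℝ) ≤ (c:ℝ) * (δ - ⌊δ⌋) :=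
            mul_nonneg hc0.le (by linarith)
          have := mul_nonpos_of_nonneg_of_nonpos hnn (by linarith : ((⌈δ⌉:ℤ):ℝ) - (K:ℝ) ≤ 0)
          linarith
        · push_neg at hKc
          have hKZ : (K:ℤ) ≤ ⌈δ⌉ - 1 := by
            have : (K:ℤ) < ⌈δ⌉ := by exact_mod_cast hKc
            omega
          have hKle : (K:ℝ) ≤ ((⌈δ⌉:ℤ):ℝ) - 1 := by exact_mod_cast hKZ
          have hKF : (K:ℝ) ≤ ((⌊δ⌋:ℤ):ℝ) := by linarith
          have hstep : (δ - ⌊δ⌋) * (((⌈δ⌉:ℤ):ℝ) - K) ≤ δ - K := by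
            nlinarith [mul_nonneg (by linarith : (0:ℝ) ≤ 1 - (δ - ⌊δ⌋))
                (by linarith : (0:ℝ) ≤ ((⌊δ⌋:ℤ):ℝ) - K),
              mul_nonneg (by linarith : (0:ℝ) ≤ δ - ⌊δ⌋)
                (by linarith : (0:ℝ) ≤ 1 + ((⌊δ⌋:ℤ):ℝ) - ((⌈δ⌉:ℤ):ℝ))]
          have hmul := mul_le_mul_of_nonneg_left hstep hc0.le
          rw [hK] at hDp
          nlinarith
    · -- convexity of the polyhedron
      rintro p ⟨hp1, hp2, hp3, hp4, hp5, hp6⟩ q ⟨hq1, hq2, hq3, hq4, hq5, hq6⟩ a b ha hb hab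
      have hfst : (a • p + b • q).1 = a * p.1 + b * q.1 := by
        simp [Prod.fst_add, Prod.smul_fst, smul_eq_mul]
      have hsnd : ∀ i, (a • p + b • q).2 i = a * p.2 i + b * q.2 i := by
        intro i
        simp [Prod.snd_add, Prod.smul_snd, smul_eq_mul]
      have hsum : ∑ i, (a • p + b • q).2 i = a * (∑ i, p.2 i) + b * (∑ i, q.2 i) := by
        rw [Finset.sum_congr rfl (fun i _ => hsnd i), Finset.sum_add_distrib,
          ← Finset.mul_sum, ← Finset.mul_sum]
      have hb' : b = 1 - a := by linarith
      subst hb'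
      refine ⟨?_, ?_, ?_, ?_, ?_, ?_⟩
      · rw [hfst]
        nlinarith [mul_le_mul_of_nonneg_left hp1 ha, mul_le_mul_of_nonneg_left hq1 hb]
      · rw [hfst]
        nlinarith [mul_le_mul_of_nonneg_left hp2 ha, mul_le_mul_of_nonneg_left hq2 hb]
      · intro i
        rw [hsnd i]
        constructor
        · nlinarith [mul_le_mul_of_nonneg_left (hp3 i).1 ha,
            mul_le_mul_of_nonneg_left (hq3 i).1 hb]
        · nlinarith [mul_le_mul_of_nonneg_left (hp3 i).2 ha,
            mul_le_mul_of_nonneg_left (hq3 i).2 hb]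
      · rw [hfst, hsum]
        nlinarith [mul_le_mul_of_nonneg_left hp4 ha, mul_le_mul_of_nonneg_left hq4 hb]
      · rw [hsum]
        nlinarith [mul_le_mul_of_nonneg_left hp5 ha, mul_le_mul_of_nonneg_left hq5 hb]
      · rw [hfst, hsum]
        nlinarith [mul_le_mul_of_nonneg_left hp6 ha, mul_le_mul_of_nonneg_left hq6 hb]
  · -- polyhedron ⊆ convex hull
    rintro p ⟨h1, h2, h3, h4, h5, h6⟩
    set Sset : Set (ℝ × (Fin ν → ℝ)) :=
      {p : ℝ × (Fin ν → ℝ) | (∀ i, p.2 i = 0 ∨ p.2 i = 1) ∧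
        (D : ℝ) ≤ p.1 + (c : ℝ) * ∑ i, p.2 i ∧ (l : ℝ) ≤ p.1 ∧ p.1 ≤ (c : ℝ)} with hSset
    set s : ℝ := ∑ i, p.2 i with hsdef
    have hy := decomp s p.2 (fun i => (h3 i).1) (fun i => (h3 i).2) rfl
    rw [_root_.convexHull_eq] at hy
    obtain ⟨ι, t, w, z, hw0, hw1, hzT, hcm⟩ := hy
    have hcm' : ∑ k ∈ t, w k • z k = p.2 := by
      rw [← Finset.centerMass_eq_of_sum_1 t z hw1]; exact hcm
    set n : ι → ℝ := fun k => ∑ i, z k i with hndef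
    have hnk : ∀ k ∈ t, n k = ((⌊s⌋:ℤ):ℝ) ∨ n k = ((⌈s⌉:ℤ):ℝ) := fun k hk => (hzT k hk).2
    have hFC : ((⌊s⌋:ℤ):ℝ) ≤ ((⌈s⌉:ℤ):ℝ) := by exact_mod_cast Int.floor_le_ceil s
    have hnk_ge : ∀ k ∈ t, ((⌊s⌋:ℤ):ℝ) ≤ n k := by
      intro k hk; rcases hnk k hk with h | h <;> rw [h]
      exact hFC
    have hnk_le : ∀ k ∈ t, n k ≤ ((⌈s⌉:ℤ):ℝ) := by
      intro k hk; rcases hnk k hk with h | h <;> rw [h]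
      exact hFC
    have hmfloor : ⌈((D:ℝ) - c) / c⌉ ≤ ⌊s⌋ := Int.le_floor.2 h5
    have hDc : (D:ℝ) - c ≤ c * ((⌊s⌋:ℤ):ℝ) := by
      have h1' : ((D:ℝ) - c) / c ≤ ((⌊s⌋:ℤ):ℝ) := by
        calc ((D:ℝ) - c) / c ≤ ((⌈((D:ℝ) - c) / c⌉ : ℤ):ℝ) := Int.le_ceil _
          _ ≤ ((⌊s⌋:ℤ):ℝ) := by exact_mod_cast hmfloor
      calc (D:ℝ) - c = (((D:ℝ) - c) / c) * c := by field_simp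
        _ ≤ ((⌊s⌋:ℤ):ℝ) * c := mul_le_mul_of_nonneg_right h1' hc0.le
        _ = c * ((⌊s⌋:ℤ):ℝ) := mul_comm _ _
    have hDcn : ∀ k ∈ t, (D:ℝ) - c ≤ c * n k := by
      intro k hk
      calc (D:ℝ) - c ≤ c * ((⌊s⌋:ℤ):ℝ) := hDc
        _ ≤ c * n k := mul_le_mul_of_nonneg_left (hnk_ge k hk) hc0.le
    set L : ι → ℝ := fun k => max (l:ℝ) ((D:ℝ) - c * n k) with hLdef
    have memL : ∀ k ∈ t, ((L k, z k) : ℝ × (Fin ν → ℝ)) ∈ Sset := by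
      intro k hk
      refine ⟨(hzT k hk).1, ?_, le_max_left _ _, ?_⟩
      · show (D:ℝ) ≤ L k + c * ∑ i, z k i
        have hzn : ∑ i, z k i = n k := rfl
        rw [hzn]
        have := le_max_right (l:ℝ) ((D:ℝ) - c * n k)
        have hLk : (D:ℝ) - c * n k ≤ L k := this
        linarith
      · show L k ≤ (c:ℝ)
        apply max_le hlcR.le
        linarith [hDcn k hk]
    have memC : ∀ k ∈ t, (((c:ℝ), z k) : ℝ × (Fin ν → ℝ)) ∈ Sset := by
      intro k hk
      refine ⟨(hzT k hk).1, ?_, hlcR.le, le_refl _⟩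
      show (D:ℝ) ≤ (c:ℝ) + c * ∑ i, z k i
      have hzn : ∑ i, z k i = n k := rfl
      rw [hzn]
      linarith [hDcn k hk]
    have hq1 : ∑ k ∈ t, w k • ((L k, z k) : ℝ × (Fin ν → ℝ)) ∈ convexHull ℝ Sset :=
      (convex_convexHull ℝ Sset).sum_mem hw0 hw1
        (fun k hk => subset_convexHull ℝ Sset (memL k hk))
    have hq2 : ∑ k ∈ t, w k • (((c:ℝ), z k) : ℝ × (Fin ν → ℝ)) ∈ convexHull ℝ Sset :=
      (convex_convexHull ℝ Sset).sum_mem hw0 hw1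
        (fun k hk => subset_convexHull ℝ Sset (memC k hk))
    set A : ℝ := ∑ k ∈ t, w k * L k with hAdef
    have hq1eq : ∑ k ∈ t, w k • ((L k, z k) : ℝ × (Fin ν → ℝ)) = (A, p.2) := by
      apply Prod.ext
      · rw [Prod.fst_sum]
        simp [Prod.smul_fst, smul_eq_mul, hAdef]
      · rw [Prod.snd_sum]
        simpa [Prod.smul_snd] using hcm'
    have hq2eq : ∑ k ∈ t, w k • (((c:ℝ), z k) : ℝ × (Fin ν → ℝ)) = ((c:ℝ), p.2) := by
      apply Prod.ext
      · rw [Prod.fst_sum]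
        have e : ∀ k ∈ t, (w k • (((c:ℝ), z k) : ℝ × (Fin ν → ℝ))).1 = w k * c :=
          fun k _ => rfl
        rw [Finset.sum_congr rfl e, ← Finset.sum_mul, hw1, one_mul]
      · rw [Prod.snd_sum]
        simpa [Prod.smul_snd] using hcm'
    have hsum_n : ∑ k ∈ t, w k * n k = s := by
      have hfun : ∀ i, ∑ k ∈ t, w k * z k i = p.2 i := by
        intro i
        have := congrFun hcm' i
        rw [Finset.sum_apply] at this
        simpa [Pi.smul_apply, smul_eq_mul] using this
      calc ∑ k ∈ t, w k * n k = ∑ k ∈ t, ∑ i, w k * z k i := by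
            apply Finset.sum_congr rfl; intro k _
            exact Finset.mul_sum _ _ _
        _ = ∑ i, ∑ k ∈ t, w k * z k i := Finset.sum_comm
        _ = ∑ i, p.2 i := Finset.sum_congr rfl (fun i _ => hfun i)
        _ = s := rfl
    obtain ⟨a, b, hab, habs⟩ :
        ∃ a b : ℝ, (∀ k ∈ t, L k ≤ a + b * n k) ∧ a + b * s ≤ p.1 := by
      rcases le_or_gt ((⌈δ⌉:ℤ):ℝ) s with hc1 | hc1
      · refine ⟨(l:ℝ), 0, ?_, by simpa using h1⟩
        intro k hk
        have hfl : ((⌈δ⌉:ℤ):ℝ) ≤ ((⌊s⌋:ℤ):ℝ) := by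
          exact_mod_cast Int.le_floor.2 hc1
        have hδn : δ ≤ n k := le_trans hC (le_trans hfl (hnk_ge k hk))
        have hmul := mul_le_mul_of_nonneg_left hδn hc0.le
        rw [zero_mul, add_zero]
        exact max_le le_rfl (by linarith)
      · rcases le_or_gt s ((⌊δ⌋:ℤ):ℝ) with hc3 | hc2
        · refine ⟨(D:ℝ), -(c:ℝ), ?_, by nlinarith [h4]⟩
          intro k hk
          have hcl : ((⌈s⌉:ℤ):ℝ) ≤ ((⌊δ⌋:ℤ):ℝ) := by
            exact_mod_cast Int.ceil_le.2 hc3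
          have hδn : n k ≤ δ := le_trans (hnk_le k hk) (le_trans hcl hF)
          have hmul := mul_le_mul_of_nonneg_left hδn hc0.le
          have he : (D:ℝ) + (-(c:ℝ)) * n k = (D:ℝ) - c * n k := by ring
          rw [he]
          exact max_le (by linarith) le_rfl
        · have hceq : (⌈δ⌉:ℤ) = ⌊δ⌋ + 1 := by
            have ha1 : ((⌊δ⌋:ℤ):ℝ) < ((⌈δ⌉:ℤ):ℝ) := lt_trans hc2 hc1
            have ha2 : (⌊δ⌋:ℤ) < ⌈δ⌉ := by exact_mod_cast ha1
            have ha3 := Int.ceil_le_floor_add_one δ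
            omega
          have hCFe : ((⌈δ⌉:ℤ):ℝ) = ((⌊δ⌋:ℤ):ℝ) + 1 := by exact_mod_cast hceq
          have hsC : s < ((⌊δ⌋:ℤ):ℝ) + 1 := by linarith
          have hfs : ⌊s⌋ = ⌊δ⌋ := by
            rw [Int.floor_eq_iff]
            exact ⟨hc2.le, hsC⟩
          have hcs : ⌈s⌉ = ⌈δ⌉ := by
            rw [Int.ceil_eq_iff]
            constructor
            · rw [hCFe]; linarith
            · linarith
          refine ⟨(l:ℝ) + c * (δ - ⌊δ⌋) * ((⌈δ⌉:ℤ):ℝ), -(c * (δ - ⌊δ⌋)), ?_,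
            by nlinarith [h6]⟩
          intro k hk
          rcases hnk k hk with h | h <;> simp only [hLdef]
          · rw [h, hfs, hCFe]
            apply max_le
            · nlinarith [mul_nonneg hc0.le (by linarith : (0:ℝ) ≤ δ - ⌊δ⌋)]
            · nlinarith [hcδ]
          · rw [h, hcs, hCFe]
            apply max_le
            · nlinarith []
            · nlinarith [hcδ, mul_le_mul_of_nonneg_left
                (show δ ≤ ((⌊δ⌋:ℤ):ℝ) + 1 from hF1.le) hc0.le]
    have hA_le : A ≤ p.1 := by
      have step1 : A ≤ ∑ k ∈ t, w k * (a + b * n k) :=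
        Finset.sum_le_sum (fun k hk => mul_le_mul_of_nonneg_left (hab k hk) (hw0 k hk))
      have step2 : ∑ k ∈ t, w k * (a + b * n k) = a + b * s := by
        have e : ∀ k ∈ t, w k * (a + b * n k) = a * w k + b * (w k * n k) :=
          fun k _ => by ring
        rw [Finset.sum_congr rfl e, Finset.sum_add_distrib, ← Finset.mul_sum,
          ← Finset.mul_sum, hw1, hsum_n, mul_one]
      linarith
    rw [hq1eq] at hq1
    rw [hq2eq] at hq2
    rcases lt_or_eq_of_le (le_trans hA_le h2) with hAc | hAc
    · set θ : ℝ := (p.1 - A) / ((c:ℝ) - A) with hθ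
      have hca : (0:ℝ) < (c:ℝ) - A := by linarith
      have hθ0 : 0 ≤ θ := div_nonneg (by linarith) hca.le
      have hθ1 : θ ≤ 1 := by rw [div_le_one hca]; linarith
      have hθc : θ * ((c:ℝ) - A) = p.1 - A := div_mul_cancel₀ _ hca.ne'
      have hcomb := (convex_convexHull ℝ Sset) hq1 hq2
        (by linarith : (0:ℝ) ≤ 1 - θ) hθ0 (by ring)
      have hpe : (1 - θ) • ((A, p.2) : ℝ × (Fin ν → ℝ)) + θ • (((c:ℝ), p.2)) = p := by
        rw [Prod.smul_mk, Prod.smul_mk, Prod.mk_add_mk]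
        apply Prod.ext
        · show (1 - θ) • A + θ • (c:ℝ) = p.1
          rw [smul_eq_mul, smul_eq_mul]
          nlinarith [hθc]
        · show (1 - θ) • p.2 + θ • p.2 = p.2
          rw [← add_smul]
          norm_num
      rwa [hpe] at hcomb
    · have hp1c : p.1 = (c:ℝ) := le_antisymm h2 (by rw [← hAc]; exact hA_le)
      have hpe : p = (((c:ℝ), p.2) : ℝ × (Fin ν → ℝ)) := Prod.ext hp1c rfl
      rw [hpe]
      exact hq2
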